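/- Let E_1, E_2 be 2t×t matrices over F_q such that E_2 has any t rows linearly independent and the 2t×2t matrix (E_2, E_1 + d·E_2) is nonsingular for some d ∈ F_q. Then for each fixed X ∈ F_q^t, the map (Y, H) ↦ E_1·X + E_2·Y + (E_1 + d·E_2)·H is a bijection from F_q^t × F_q^t onto F_q^{2t}, and the resulting multiset of q^{2t} vectors, arranged as columns of a 2t × q^{2t} array, forms an LOA(q^t; t, 2t, q) when partitioned appropriately; in particular every vector of F_q^{2t} occurs exactly once. -/
import Mathlib


open Finset

/-- An orthogonal array of strength `t` with `k` rows (constraints), columns indexed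
by `ι`, symbols in `α`, and index `lam`: in every choice of `t` distinct rows,
every `t`-tuple of symbols appears in exactly `lam` columns. -/
def IsOAOn {α ι : Type*} [Fintype α] [DecidableEq α] [Fintype ι] {k : ℕ} (t : ℕ)
    (A : Fin k → ι → α) (lam : ℕ) : Prop :=
  ∀ rows : Fin t → Fin k, Function.Injective rows → ∀ x : Fin t → α,
    (Finset.univ.filter fun c : ι => ∀ i, A (rows i) c = x i).card = lam

/-- An array is simple if no two of its columns are identical. -/
def IsSimpleArr {α ι : Type*} {k : ℕ} (A : Fin k → ι → α) : Prop :=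
  Function.Injective fun c : ι => fun i => A i c

/-- A large set of orthogonal arrays: a family (indexed by `σ`) of simple OAs of
strength `t` and index `lam` such that every `k`-tuple of symbols occurs as a
column of exactly one array of the family. -/
def IsLOAOn {α ι σ : Type*} [Fintype α] [DecidableEq α] [Fintype ι] {k : ℕ} (t : ℕ)
    (A : σ → Fin k → ι → α) (lam : ℕ) : Prop :=
  (∀ s, IsOAOn t (A s) lam ∧ IsSimpleArr (A s)) ∧
  ∀ x : Fin k → α, ∃! p : σ × ι, (fun i => A p.1 i p.2) = x

/-- A strong double large set of orthogonal arrays `SDLOA(N; t, k, v)`: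
the family `A_0, …, A_{N-1}` is an LOA, the derived arrays `B_j`
(whose `s`-th column is the `j`-th column of `A_s`) form an LOA, and the arrays
`D` (`j`-th column = `j`-th column of `A_j`) and `D'` (`j`-th column =
`(N-1-j)`-th column of `A_j`) are both OAs. -/
def IsSDLOA {α : Type*} [Fintype α] [DecidableEq α] {k N : ℕ} (t : ℕ)
    (A : Fin N → Fin k → Fin N → α) (lam : ℕ) : Prop :=
  IsLOAOn t A lam ∧
  IsLOAOn t (fun (j : Fin N) (i : Fin k) (s : Fin N) => A s i j) lam ∧
  IsOAOn t (fun (i : Fin k) (j : Fin N) => A j i j) lam ∧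
  IsOAOn t (fun (i : Fin k) (j : Fin N) => A j i (Fin.rev j)) lam

/-- A `t`-multimagic square of order `n`: an `n × n` matrix whose entries are the
consecutive integers `0, …, n^2 - 1` and such that, for every `1 ≤ e ≤ t`,
the entrywise `e`-th power has equal row sums, column sums, and sums on both
diagonals. -/
def IsMultimagic (n t : ℕ) (M : Fin n → Fin n → ℕ) : Prop :=
  (∀ i j, M i j < n ^ 2) ∧
  (Function.Injective fun p : Fin n × Fin n => M p.1 p.2) ∧
  ∀ e, 1 ≤ e → e ≤ t → ∃ S,
    (∀ i, ∑ j, (M i j) ^ e = S) ∧ (∀ j, ∑ i, (M i j) ^ e = S) ∧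
    (∑ i, (M i i) ^ e = S) ∧ (∑ i, (M i (Fin.rev i)) ^ e = S)

/-- A set of `m` complementary `t`-multimagic squares of order `n`, `m`-CMS(`n`,`t`):
`m` multimagic squares such that summing the `(t+1)`-st powers of the entries over
all `m` squares along any fixed row, any fixed column, or either diagonal always
gives `m · S_{t+1}(n)` (the conditions are stated multiplied through by `n`). -/
def IsCMS (m n t : ℕ) (B : Fin m → Fin n → Fin n → ℕ) : Prop :=
  (∀ s, IsMultimagic n t (B s)) ∧
  (∀ i, n * ∑ s, ∑ j, (B s i j) ^ (t + 1) = m * ∑ k ∈ Finset.range (n ^ 2), k ^ (t + 1)) ∧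
  (∀ j, n * ∑ s, ∑ i, (B s i j) ^ (t + 1) = m * ∑ k ∈ Finset.range (n ^ 2), k ^ (t + 1)) ∧
  (n * ∑ s, ∑ i, (B s i i) ^ (t + 1) = m * ∑ k ∈ Finset.range (n ^ 2), k ^ (t + 1)) ∧
  (n * ∑ s, ∑ i, (B s i (Fin.rev i)) ^ (t + 1) = m * ∑ k ∈ Finset.range (n ^ 2), k ^ (t + 1))

/-- Any `t` rows of the matrix `M` are linearly independent. -/
def RowsIndep {F : Type*} [Field F] {m' : Type*} {s : ℕ} (t : ℕ)
    (M : Matrix m' (Fin s) F) : Prop :=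
  ∀ rows : Fin t → m', Function.Injective rows → LinearIndependent F fun i => M (rows i)

/-- The block matrix `(A, B)` (with `A, B` of the same shape) is nonsingular, phrased
via bijectivity of the associated linear map. -/
def NonsingularPair {F : Type*} [Field F] {m' : Type*} {s : ℕ}
    (A B : Matrix m' (Fin s) F) : Prop :=
  Function.Bijective fun p : (Fin s → F) × (Fin s → F) => A.mulVec p.1 + B.mulVec p.2

/-- If `E₂` has any `t` rows independent and `(E₂, E₁+dE₂)` is
nonsingular, then for each fixed `X` the map `(Y,H) ↦ E₁X + E₂Y + (E₁+dE₂)H` is a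
bijection onto `F_q^{2t}`, and the resulting family (one array per `H`, columns
indexed by `Y`) is an LOA(q^t; t, 2t, q); in particular every vector of
`F_q^{2t}` occurs exactly once. -/
theorem loa_of_translates {F : Type} [Field F] [Fintype F] [DecidableEq F] {t : ℕ}
    (d : F) (E1 E2 : Matrix (Fin (2 * t)) (Fin t) F)
    (h2 : RowsIndep t E2)
    (hns : NonsingularPair E2 (E1 + d • E2)) :
    ∀ X : Fin t → F,
      (Function.Bijective fun p : (Fin t → F) × (Fin t → F) =>
        E1.mulVec X + E2.mulVec p.1 + (E1 + d • E2).mulVec p.2) ∧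
      IsLOAOn t (fun (H : Fin t → F) (i : Fin (2 * t)) (Y : Fin t → F) =>
        (E1.mulVec X + E2.mulVec Y + (E1 + d • E2).mulVec H) i) 1 := by
  intro X
  set B : Matrix (Fin (2*t)) (Fin t) F := E1 + d • E2 with hB
  set c : Fin (2*t) → F := E1.mulVec X with hc
  -- key: for any injective choice of t rows, the induced map on Y is bijective
  have key : ∀ r : Fin t → Fin (2*t), Function.Injective r →
      Function.Bijective (fun Y : Fin t → F => fun i => E2.mulVec Y (r i)) := by
    intro r hr
    have hM : IsUnit (Matrix.of fun i j => E2 (r i) j) :=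
      Matrix.linearIndependent_rows_iff_isUnit.mp (h2 r hr)
    exact ⟨Matrix.mulVec_injective_iff_isUnit.mpr hM,
      Matrix.mulVec_surjective_iff_isUnit.mpr hM⟩
  have hE2inj : Function.Injective E2.mulVec := by
    intro Y Y' h
    exact (key (Fin.castLE (by omega)) (Fin.castLE_injective _)).1
      (funext fun i => congrFun h _)
  have hbij : Function.Bijective fun p : (Fin t → F) × (Fin t → F) =>
      c + E2.mulVec p.1 + B.mulVec p.2 := by
    have heq : (fun p : (Fin t → F) × (Fin t → F) =>
        c + E2.mulVec p.1 + B.mulVec p.2) =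
        (fun x => c + x) ∘ (fun p : (Fin t → F) × (Fin t → F) =>
          E2.mulVec p.1 + B.mulVec p.2) := by
      funext p; simp [add_assoc]
    rw [heq]
    exact (Equiv.addLeft c).bijective.comp hns
  refine ⟨hbij, ?_, ?_⟩
  · intro H
    constructor
    · intro r hr x
      obtain ⟨Y0, hY0, hun⟩ := (key r hr).existsUnique
        (fun i => x i - c (r i) - B.mulVec H (r i))
      rw [Finset.card_eq_one]
      refine ⟨Y0, ?_⟩
      ext Y
      simp only [Finset.mem_filter, Finset.mem_univ, true_and, Finset.mem_singleton]
      constructor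
      · intro h
        apply hun
        funext i
        have hi := h i
        simp only [Pi.add_apply] at hi
        linear_combination hi
      · rintro rfl i
        have hi := congrFun hY0 i
        simp only [Pi.add_apply]
        linear_combination hi
    · intro Y Y' h
      apply hE2inj
      funext i
      have hi := congrFun h i
      simp only [Pi.add_apply] at hi
      linear_combination hi
  · intro x
    obtain ⟨⟨Y0, H0⟩, hp, hu⟩ := hbij.existsUnique x
    refine ⟨(H0, Y0), hp, ?_⟩
    rintro ⟨H, Y⟩ h
    have := hu (Y, H) h
    rw [Prod.mk.injEq] at this ⊢
    exact ⟨this.2, this.1⟩
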